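/- Let (X, Z) be a pair of Banach spaces such that there is a constant C ≥ 1 with the property: for every closed subset A ⊆ X and every Lipschitz mapping f : A → Z satisfying the mean value condition for a bounded map D with M = sup_{y∈A}‖D(y)‖ < ∞, there exists a C¹ smooth Lipschitz extension G of f to X with Lip(G) ≤ C(M + Lip(f)). Then the pair (X, Z) satisfies property (*) : for every subset A ⊆ X, every Lipschitz mapping f : A → Z and every ε > 0 there is a C¹ smooth Lipschitz mapping g : X → Z with ‖f(x) − g(x)‖ < ε on A and Lip(g) ≤ C·Lip(f). -/

import Mathlib

/-- A uniformly separated set is closed. -/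
lemma separated_isClosed {X : Type*} [NormedAddCommGroup X] (s : Set X) (η : ℝ) (hη : 0 < η)
    (hs : ∀ x ∈ s, ∀ y ∈ s, x ≠ y → η ≤ ‖x - y‖) : IsClosed s := by
  rw [← isOpen_compl_iff, Metric.isOpen_iff]
  intro x hx
  by_cases h : ∃ p ∈ s, dist x p < η / 2
  · obtain ⟨p, hp, hpd⟩ := h
    have hxp : (0 : ℝ) < dist x p := by
      rw [dist_pos]; intro h; exact hx (h ▸ hp)
    refine ⟨min (η / 2) (dist x p), lt_min (by linarith) hxp, fun q hq hqs => ?_⟩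
    simp only [Metric.mem_ball, lt_min_iff] at hq
    have hqp : q ≠ p := fun h => by
      rw [h, dist_comm] at hq; exact absurd hq.2 (lt_irrefl _)
    have : dist q p < η := by
      calc dist q p ≤ dist q x + dist x p := dist_triangle _ _ _
        _ < η / 2 + η / 2 := add_lt_add hq.1 hpd
        _ = η := by ring
    rw [dist_eq_norm] at this
    linarith [hs q hqs p hp hqp]
  · push_neg at h
    exact ⟨η / 2, by linarith, fun q hq hqs =>
      absurd (h q hqs) (not_le.mpr (by rw [dist_comm]; exact hq))⟩

theorem property_star_of_smooth_extension_property
    {X Z : Type*} [NormedAddCommGroup X] [NormedSpace ℝ X] [CompleteSpace X]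
    [NormedAddCommGroup Z] [NormedSpace ℝ Z] [CompleteSpace Z]
    (C : ℝ) (hC : 1 ≤ C)
    (hext : ∀ (A : Set X), IsClosed A → ∀ (f : X → Z) (L M : ℝ) (D : X → X →L[ℝ] Z),
      0 ≤ L → 0 ≤ M →
      (∀ x ∈ A, ∀ y ∈ A, ‖f x - f y‖ ≤ L * ‖x - y‖) →
      ContinuousOn D A → (∀ y ∈ A, ‖D y‖ ≤ M) →
      (∀ y ∈ A, ∀ ε > (0 : ℝ), ∃ r > (0 : ℝ),
        ∀ z ∈ A ∩ Metric.ball y r, ∀ w ∈ A ∩ Metric.ball y r,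
          ‖f z - f w - D y (z - w)‖ ≤ ε * ‖z - w‖) →
      ∃ G : X → Z, ContDiff ℝ 1 G ∧ (∀ a ∈ A, G a = f a) ∧
        ∀ x y : X, ‖G x - G y‖ ≤ C * (M + L) * ‖x - y‖) :
    ∀ (A : Set X) (f : X → Z) (L : ℝ), 0 ≤ L →
      (∀ x ∈ A, ∀ y ∈ A, ‖f x - f y‖ ≤ L * ‖x - y‖) →
      ∀ ε > (0 : ℝ), ∃ g : X → Z, ContDiff ℝ 1 g ∧
        (∀ x ∈ A, ‖f x - g x‖ < ε) ∧ ∀ x y : X, ‖g x - g y‖ ≤ C * L * ‖x - y‖ := by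
  intro A f L hL hf ε hε
  rcases eq_or_lt_of_le hL with hL0 | hLpos
  · -- L = 0 : f is constant on A
    rcases A.eq_empty_or_nonempty with rfl | ⟨a, ha⟩
    · exact ⟨fun _ => 0, contDiff_const, fun x hx => absurd hx (Set.notMem_empty x),
        fun x y => by simp; positivity⟩
    · refine ⟨fun _ => f a, contDiff_const, fun x hx => ?_, fun x y => by simp; positivity⟩
      have := hf x hx a ha
      rw [← hL0] at this
      simp only [zero_mul] at this
      have : f x = f a := sub_eq_zero.mp (norm_le_zero_iff.mp this)
      simpa [this] using hε
  · -- L > 0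
    set η : ℝ := ε / (2 * (C + 1) * L) with hηdef
    have hCpos : (0 : ℝ) < C + 1 := by linarith
    have hηpos : 0 < η := div_pos hε (by positivity)
    -- maximal η-separated subset of A
    set S : Set (Set X) := {s | s ⊆ A ∧ ∀ x ∈ s, ∀ y ∈ s, x ≠ y → η ≤ ‖x - y‖} with hS
    obtain ⟨N, hNmax⟩ := zorn_subset S (fun c hc hchain => by
      refine ⟨⋃₀ c, ⟨fun x hx => ?_, fun x hx y hy hxy => ?_⟩, fun s hs => Set.subset_sUnion_of_mem hs⟩
      · obtain ⟨s, hs, hxs⟩ := hx; exact (hc hs).1 hxs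
      · obtain ⟨s, hs, hxs⟩ := hx
        obtain ⟨t, ht, hyt⟩ := hy
        rcases hchain.total hs ht with hst | hts
        · exact (hc ht).2 x (hst hxs) y hyt hxy
        · exact (hc hs).2 x hxs y (hts hyt) hxy)
    have hNA : N ⊆ A := hNmax.prop.1
    have hNsep : ∀ x ∈ N, ∀ y ∈ N, x ≠ y → η ≤ ‖x - y‖ := hNmax.prop.2
    have hNclosed : IsClosed N := separated_isClosed N η hηpos hNsep
    -- every point of A is within η of N
    have hnet : ∀ a ∈ A, ∃ n ∈ N, ‖a - n‖ < η := by
      intro a ha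
      by_contra h
      push_neg at h
      have haN : a ∉ N := fun haN => by
        have := h a haN; simp at this; linarith
      have : insert a N ∈ S := by
        refine ⟨Set.insert_subset ha hNA, fun x hx y hy hxy => ?_⟩
        rcases hx with rfl | hx
        · rcases hy with rfl | hy
          · exact absurd rfl hxy
          · exact h y hy
        · rcases hy with rfl | hy
          · rw [norm_sub_rev]; exact h x hx
          · exact hNsep x hx y hy hxy
      have := hNmax.2 this (Set.subset_insert _ _)
      exact haN (this (Set.mem_insert _ _))
    -- apply extension with D = 0
    obtain ⟨G, hG1, hGeq, hGlip⟩ := hext N hNclosed f L 0 (fun _ => 0) hL le_rfl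
      (fun x hx y hy => hf x (hNA hx) y (hNA hy)) continuousOn_const
      (fun y _ => by simp)
      (fun y hy ε' hε' => by
        refine ⟨η / 2, by linarith, fun z hz w hw => ?_⟩
        rcases eq_or_ne z w with rfl | hzw
        · simp
        · exfalso
          have h1 := hz.2; have h2 := hw.2
          rw [Metric.mem_ball] at h1 h2
          have : dist z w < η := by
            calc dist z w ≤ dist z y + dist y w := dist_triangle _ _ _
              _ < η / 2 + η / 2 := add_lt_add h1 (by rwa [dist_comm])
              _ = η := by ring
          rw [dist_eq_norm] at this
          exact absurd (hNsep z hz.1 w hw.1 hzw) (not_le.mpr this))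
    rw [zero_add] at hGlip
    refine ⟨G, hG1, fun a ha => ?_, hGlip⟩
    obtain ⟨n, hn, hdist⟩ := hnet a ha
    have h1 : ‖f a - f n‖ ≤ L * ‖a - n‖ := hf a ha n (hNA hn)
    have h2 : ‖G n - G a‖ ≤ C * L * ‖n - a‖ := hGlip n a
    have key : ‖f a - G a‖ ≤ (C + 1) * L * ‖a - n‖ := by
      calc ‖f a - G a‖ = ‖(f a - f n) + (G n - G a)‖ := by rw [hGeq n hn, sub_add_sub_cancel]
        _ ≤ ‖f a - f n‖ + ‖G n - G a‖ := norm_add_le _ _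
        _ ≤ L * ‖a - n‖ + C * L * ‖n - a‖ := add_le_add h1 h2
        _ = (C + 1) * L * ‖a - n‖ := by rw [norm_sub_rev n a]; ring
    have : (C + 1) * L * ‖a - n‖ < (C + 1) * L * η :=
      mul_lt_mul_of_pos_left hdist (by positivity)
    have hηval : (C + 1) * L * η = ε / 2 := by
      rw [hηdef]; field_simp
    calc ‖f a - G a‖ ≤ (C + 1) * L * ‖a - n‖ := key
      _ < (C + 1) * L * η := this
      _ = ε / 2 := hηval
      _ < ε := by linarith
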